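/- Let 0 < a ≤ 1 and F = {K_3^a, K_4^0}, i.e., F-free weighted graphs are K_4-free graphs containing no triangle all three of whose edge weights exceed a. Then d(F) = 2/(4−a). -/

import Mathlib

open Finset
open scoped Classical

/-- A weighted clique `(r, f)`: a size `r` together with weights on its pairs. -/
structure WeightedClique where
  r : ℕ
  f : Fin r → Fin r → ℝ

/-- `K_r^a`: the weighted clique of size `r` with all weights equal to `a`. -/
def constWeightedClique (r : ℕ) (a : ℝ) : WeightedClique := ⟨r, fun _ _ => a⟩

/-- An edge-weighted graph `(G, w)` contains the weighted clique `C`. -/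
def ContainsWC {n : ℕ} (G : SimpleGraph (Fin n)) (w : Fin n → Fin n → ℝ)
    (C : WeightedClique) : Prop :=
  ∃ φ : Fin C.r → Fin n, Function.Injective φ ∧
    ∀ i j : Fin C.r, i < j → G.Adj (φ i) (φ j) ∧ C.f i j < w (φ i) (φ j)

/-- `(G, w)` is `F`-free: it contains no member of `F`. -/
def WCFree {n : ℕ} (G : SimpleGraph (Fin n)) (w : Fin n → Fin n → ℝ)
    (F : Set WeightedClique) : Prop :=
  ∀ C ∈ F, ¬ ContainsWC G w C

/-- `w(G) = (2/n²)·∑_{e ∈ E(G)} w(e)`, written as a sum over ordered pairs of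
adjacent vertices (each edge counted twice), divided by `n²`. -/
noncomputable def wSum {n : ℕ} (G : SimpleGraph (Fin n)) (w : Fin n → Fin n → ℝ) : ℝ :=
  ((n : ℝ) ^ 2)⁻¹ * ∑ u : Fin n, ∑ v : Fin n, if G.Adj u v then w u v else 0

/-- `β_n(F)`: the supremum of `w(G)` over all `F`-free edge-weighted graphs on
`n` vertices, with edge weights in `[0,1]`. -/
noncomputable def betaWC (F : Set WeightedClique) (n : ℕ) : ℝ :=
  sSup { x : ℝ | ∃ (G : SimpleGraph (Fin n)) (w : Fin n → Fin n → ℝ),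
    (∀ u v, w u v = w v u) ∧
    (∀ u v, G.Adj u v → w u v ∈ Set.Icc (0 : ℝ) 1) ∧
    WCFree G w F ∧ x = wSum G w }

/-- For `0 < a ≤ 1` and `F = {K₃^a, K₄^0}` (no `K₄`, and no triangle with all three
edge weights exceeding `a`), we have `d(F) = 2/(4-a)`. -/
noncomputable def gQ {n : ℕ} (wt : Fin n → Fin n → ℝ) (p : Fin n) (x : Fin n → ℝ) : ℝ :=
  ∑ q, wt p q * x q

noncomputable def QQ {n : ℕ} (wt : Fin n → Fin n → ℝ) (x : Fin n → ℝ) : ℝ :=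
  ∑ p, x p * gQ wt p x

lemma gQ_add {n : ℕ} (wt : Fin n → Fin n → ℝ) (p : Fin n) (y z : Fin n → ℝ) :
    gQ wt p (y + z) = gQ wt p y + gQ wt p z := by
  simp [gQ, mul_add, Finset.sum_add_distrib]

lemma gQ_single {n : ℕ} (wt : Fin n → Fin n → ℝ) (p u : Fin n) (s : ℝ) :
    gQ wt p (Pi.single u s) = wt p u * s := by
  simp [gQ, Pi.single_apply, mul_ite, mul_zero, Finset.sum_ite_eq']

lemma sum_single_mul {n : ℕ} (u : Fin n) (s : ℝ) (C : Fin n → ℝ) :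
    ∑ p, (Pi.single u s : Fin n → ℝ) p * C p = s * C u := by
  simp [Pi.single_apply, ite_mul, zero_mul, Finset.sum_ite_eq']

lemma QQ_shift {n : ℕ} (wt : Fin n → Fin n → ℝ)
    (hsym : ∀ u v, wt u v = wt v u) {u v : Fin n}
    (huu : wt u u = 0) (hvv : wt v v = 0) (h0 : wt u v = 0)
    (x0 : Fin n → ℝ) (s t : ℝ) :
    QQ wt (x0 + Pi.single u s + Pi.single v t)
      = QQ wt x0 + 2*s*(gQ wt u x0) + 2*t*(gQ wt v x0) := by
  have hg : ∀ p, gQ wt p (x0 + Pi.single u s + Pi.single v t)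
      = gQ wt p x0 + wt p u * s + wt p v * t := by
    intro p
    rw [gQ_add, gQ_add, gQ_single, gQ_single]
  have expand : QQ wt (x0 + Pi.single u s + Pi.single v t)
      = ∑ p, (x0 p * gQ wt p x0 + x0 p * (wt p u * s) + x0 p * (wt p v * t)
        + (Pi.single u s : Fin n → ℝ) p * (gQ wt p x0 + wt p u * s + wt p v * t)
        + (Pi.single v t : Fin n → ℝ) p * (gQ wt p x0 + wt p u * s + wt p v * t)) := by
    rw [QQ]
    refine Finset.sum_congr rfl fun p _ => ?_
    rw [hg]
    simp only [Pi.add_apply]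
    ring
  rw [expand]
  rw [Finset.sum_add_distrib, Finset.sum_add_distrib, Finset.sum_add_distrib,
    Finset.sum_add_distrib]
  rw [sum_single_mul, sum_single_mul]
  have h1 : ∑ p, x0 p * (wt p u * s) = s * gQ wt u x0 := by
    rw [gQ, Finset.mul_sum]
    refine Finset.sum_congr rfl fun p _ => ?_
    rw [hsym u p]; ring
  have h2 : ∑ p, x0 p * (wt p v * t) = t * gQ wt v x0 := by
    rw [gQ, Finset.mul_sum]
    refine Finset.sum_congr rfl fun p _ => ?_
    rw [hsym v p]; ring
  rw [h1, h2, huu, hvv, h0, hsym v u, h0, QQ]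
  ring

lemma tri_quad {a w1 w2 w3 xp xq xr : ℝ} (ha : 0 < a) (ha4 : 0 < 4 - a)
    (hw1 : w1 ≤ 1) (hw2 : w2 ≤ 1) (hw3 : w3 ≤ a)
    (hp : 0 ≤ xp) (hq : 0 ≤ xq) (hr : 0 ≤ xr) (hsum : xp + xq + xr = 1) :
    (w1*xp*xq + w2*xp*xr + w3*xq*xr) * (4 - a) ≤ 1 := by
  have hxp : xp = 1 - xq - xr := by linarith
  subst hxp
  nlinarith [sq_nonneg ((4-a)*(xq+xr) - 2),
    mul_nonneg (mul_nonneg ha.le ha4.le) (sq_nonneg (xq - xr)),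
    mul_nonneg (mul_nonneg ha4.le (mul_nonneg (sub_nonneg.2 hw1) hp)) hq,
    mul_nonneg (mul_nonneg ha4.le (mul_nonneg (sub_nonneg.2 hw2) hp)) hr,
    mul_nonneg (mul_nonneg ha4.le (mul_nonneg (sub_nonneg.2 hw3) hq)) hr]

lemma key_bound {a : ℝ} (ha : 0 < a) (ha1 : a ≤ 1) {n : ℕ} (wt : Fin n → Fin n → ℝ)
    (hsym : ∀ u v, wt u v = wt v u) (h0 : ∀ u v, 0 ≤ wt u v) (h1 : ∀ u v, wt u v ≤ 1)
    (hdiag : ∀ u, wt u u = 0)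
    (htri : ∀ u v z : Fin n, u ≠ v → u ≠ z → v ≠ z → 0 < wt u v → 0 < wt u z → 0 < wt v z →
      wt u v ≤ a ∨ wt u z ≤ a ∨ wt v z ≤ a)
    (hK4 : ∀ p q r s : Fin n, p ≠ q → p ≠ r → p ≠ s → q ≠ r → q ≠ s → r ≠ s →
      ¬(0 < wt p q ∧ 0 < wt p r ∧ 0 < wt p s ∧ 0 < wt q r ∧ 0 < wt q s ∧ 0 < wt r s)) :
    ∀ (k : ℕ) (x : Fin n → ℝ), (∀ v, 0 ≤ x v) → (∑ v, x v = 1) →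
      (univ.filter (fun v => x v ≠ 0)).card ≤ k → QQ wt x ≤ 2 / (4 - a) := by
  have h4a : (0:ℝ) < 4 - a := by linarith
  intro k
  induction k with
  | zero =>
    intro x hx hsum hcard
    exfalso
    have he : (univ.filter (fun v => x v ≠ 0)) = ∅ := Finset.card_eq_zero.mp (Nat.le_zero.mp hcard)
    have hz : ∀ v, x v = 0 := by
      intro v
      by_contra hv
      have hm : v ∈ univ.filter (fun v => x v ≠ 0) := by simp [hv]
      rw [he] at hm
      exact absurd hm (Finset.notMem_empty v)
    rw [Finset.sum_congr rfl (fun v _ => hz v)] at hsum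
    simp at hsum
  | succ k ih =>
    intro x hx hsum hcard
    by_cases hcl : ∃ u v, u ≠ v ∧ x u ≠ 0 ∧ x v ≠ 0 ∧ wt u v = 0
    · obtain ⟨u, v, huv, hxu, hxv, hwuv⟩ := hcl
      set x0 : Fin n → ℝ := Function.update (Function.update x u 0) v 0 with hx0def
      have hx0u : x0 u = 0 := by
        rw [hx0def, Function.update_of_ne (Ne.symm (Ne.symm huv)), Function.update_self]
      have hx0v : x0 v = 0 := by rw [hx0def, Function.update_self]
      have hx0app : ∀ p, p ≠ u → p ≠ v → x0 p = x p := by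
        intro p hpu hpv
        rw [hx0def, Function.update_of_ne hpv, Function.update_of_ne hpu]
      have hxdec : x = x0 + Pi.single u (x u) + Pi.single v (x v) := by
        funext p
        by_cases hpu : p = u
        · subst hpu
          simp [hx0u, Pi.single_apply, huv]
        · by_cases hpv : p = v
          · subst hpv
            simp [hx0v, Pi.single_apply, Ne.symm huv]
          · simp [hx0app p hpu hpv, Pi.single_apply, hpu, hpv]
      have hx0nn : ∀ p, 0 ≤ x0 p := by
        intro p
        by_cases hpu : p = u
        · rw [hpu, hx0u]
        · by_cases hpv : p = v
          · rw [hpv, hx0v]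
          · rw [hx0app p hpu hpv]; exact hx p
      have hQx : QQ wt x = QQ wt x0 + 2*(x u)*(gQ wt u x0) + 2*(x v)*(gQ wt v x0) := by
        conv_lhs => rw [hxdec]
        exact QQ_shift wt hsym (hdiag u) (hdiag v) hwuv x0 (x u) (x v)
      have hsum0 : ∑ p, x0 p + x u + x v = 1 := by
        have : ∑ p, x p = ∑ p, x0 p + x u + x v := by
          conv_lhs => rw [hxdec]
          simp [Finset.sum_add_distrib, Pi.single_apply, Finset.sum_ite_eq']
        linarith [hsum, this]
      -- wlog: choose the endpoint with larger linear coefficient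
      rcases le_total (gQ wt u x0) (gQ wt v x0) with hle | hle
      · -- move everything to v
        set y : Fin n → ℝ := x0 + Pi.single v (x u + x v) with hydef
        have hyeq : y = x0 + Pi.single u 0 + Pi.single v (x u + x v) := by
          simp [hydef]
        have hQy : QQ wt y = QQ wt x0 + 2*(x u + x v)*(gQ wt v x0) := by
          rw [hyeq, QQ_shift wt hsym (hdiag u) (hdiag v) hwuv x0 0 (x u + x v)]
          ring
        have hynn : ∀ p, 0 ≤ y p := by
          intro p
          have hyp : y p = x0 p + (if p = v then x u + x v else 0) := by
            simp [hydef, Pi.single_apply]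
          rw [hyp]
          split_ifs
          · have := hx u; have := hx v; linarith [hx0nn p]
          · linarith [hx0nn p]
        have hysum : ∑ p, y p = 1 := by
          simp only [hydef, Pi.add_apply, Finset.sum_add_distrib, Pi.single_apply,
            Finset.sum_ite_eq', Finset.mem_univ, if_true]
          linarith [hsum0]
        have hycard : (univ.filter (fun p => y p ≠ 0)).card ≤ k := by
          have hsub : (univ.filter (fun p => y p ≠ 0)) ⊆
              (univ.filter (fun p => x p ≠ 0)).erase u := by
            intro p hp
            simp only [Finset.mem_filter, Finset.mem_univ, true_and] at hp
            rw [Finset.mem_erase]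
            constructor
            · rintro rfl
              apply hp
              simp [hydef, hx0u, Pi.single_apply, huv]
            · simp only [Finset.mem_filter, Finset.mem_univ, true_and]
              by_cases hpv : p = v
              · subst hpv; exact hxv
              · intro hxp
                apply hp
                by_cases hpu : p = u
                · subst hpu; simp [hydef, hx0u, Pi.single_apply, huv]
                · simp [hydef, Pi.single_apply, hpv, hx0app p hpu hpv, hxp]
          have hmem : u ∈ univ.filter (fun p => x p ≠ 0) := by simp [hxu]
          calc (univ.filter (fun p => y p ≠ 0)).card
              ≤ ((univ.filter (fun p => x p ≠ 0)).erase u).card := Finset.card_le_card hsub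
            _ = (univ.filter (fun p => x p ≠ 0)).card - 1 := Finset.card_erase_of_mem hmem
            _ ≤ k := by omega
        have := ih y hynn hysum hycard
        have h1 : QQ wt x ≤ QQ wt y := by
          rw [hQx, hQy]
          nlinarith [hx u, hx v, hle]
        linarith
      · -- move everything to u
        set y : Fin n → ℝ := x0 + Pi.single u (x u + x v) with hydef
        have hyeq : y = x0 + Pi.single u (x u + x v) + Pi.single v 0 := by
          simp [hydef]
        have hQy : QQ wt y = QQ wt x0 + 2*(x u + x v)*(gQ wt u x0) := by
          rw [hyeq, QQ_shift wt hsym (hdiag u) (hdiag v) hwuv x0 (x u + x v) 0]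
          ring
        have hynn : ∀ p, 0 ≤ y p := by
          intro p
          have hyp : y p = x0 p + (if p = u then x u + x v else 0) := by
            simp [hydef, Pi.single_apply]
          rw [hyp]
          split_ifs
          · have := hx u; have := hx v; linarith [hx0nn p]
          · linarith [hx0nn p]
        have hysum : ∑ p, y p = 1 := by
          simp only [hydef, Pi.add_apply, Finset.sum_add_distrib, Pi.single_apply,
            Finset.sum_ite_eq', Finset.mem_univ, if_true]
          linarith [hsum0]
        have hycard : (univ.filter (fun p => y p ≠ 0)).card ≤ k := by
          have hsub : (univ.filter (fun p => y p ≠ 0)) ⊆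
              (univ.filter (fun p => x p ≠ 0)).erase v := by
            intro p hp
            simp only [Finset.mem_filter, Finset.mem_univ, true_and] at hp
            rw [Finset.mem_erase]
            constructor
            · rintro rfl
              apply hp
              simp [hydef, hx0v, Pi.single_apply, Ne.symm huv]
            · simp only [Finset.mem_filter, Finset.mem_univ, true_and]
              by_cases hpu : p = u
              · subst hpu; exact hxu
              · intro hxp
                apply hp
                by_cases hpv : p = v
                · subst hpv; simp [hydef, hx0v, Pi.single_apply, Ne.symm huv]
                · simp [hydef, Pi.single_apply, hpu, hx0app p hpu hpv, hxp]
          have hmem : v ∈ univ.filter (fun p => x p ≠ 0) := by simp [hxv]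
          calc (univ.filter (fun p => y p ≠ 0)).card
              ≤ ((univ.filter (fun p => x p ≠ 0)).erase v).card := Finset.card_le_card hsub
            _ = (univ.filter (fun p => x p ≠ 0)).card - 1 := Finset.card_erase_of_mem hmem
            _ ≤ k := by omega
        have := ih y hynn hysum hycard
        have h1 : QQ wt x ≤ QQ wt y := by
          rw [hQx, hQy]
          nlinarith [hx u, hx v, hle]
        linarith
    · -- clique case
      push_neg at hcl
      set S := univ.filter (fun v => x v ≠ 0) with hSdef
      have hpos : ∀ p q, p ∈ S → q ∈ S → p ≠ q → 0 < wt p q := by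
        intro p q hp hq hpq
        simp only [hSdef, Finset.mem_filter] at hp hq
        exact lt_of_le_of_ne (h0 p q) (Ne.symm (hcl p q hpq hp.2 hq.2))
      have hxzero : ∀ p, p ∉ S → x p = 0 := by
        intro p hp
        simp only [hSdef, Finset.mem_filter, Finset.mem_univ, true_and, not_not] at hp
        exact hp
      have hS3 : S.card ≤ 3 := by
        by_contra hc
        push_neg at hc
        obtain ⟨p, hp⟩ := Finset.card_pos.mp (by omega : 0 < S.card)
        obtain ⟨q, hq⟩ := Finset.card_pos.mp
          (by rw [Finset.card_erase_of_mem hp]; omega : 0 < (S.erase p).card)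
        obtain ⟨r, hr⟩ := Finset.card_pos.mp
          (by rw [Finset.card_erase_of_mem hq, Finset.card_erase_of_mem hp]; omega :
            0 < ((S.erase p).erase q).card)
        obtain ⟨s, hs⟩ := Finset.card_pos.mp
          (by rw [Finset.card_erase_of_mem hr, Finset.card_erase_of_mem hq,
              Finset.card_erase_of_mem hp]; omega :
            0 < (((S.erase p).erase q).erase r).card)
        obtain ⟨hsr, hsq', hsp', hsS⟩ : s ≠ r ∧ s ≠ q ∧ s ≠ p ∧ s ∈ S := by
          simp only [Finset.mem_erase] at hs
          exact ⟨hs.1, hs.2.1, hs.2.2.1, hs.2.2.2⟩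
        obtain ⟨hrq, hrp, hrS⟩ : r ≠ q ∧ r ≠ p ∧ r ∈ S := by
          simp only [Finset.mem_erase] at hr
          exact ⟨hr.1, hr.2.1, hr.2.2⟩
        obtain ⟨hqp, hqS⟩ : q ≠ p ∧ q ∈ S := by
          simp only [Finset.mem_erase] at hq
          exact ⟨hq.1, hq.2⟩
        exact hK4 p q r s (Ne.symm hqp) (Ne.symm hrp) (Ne.symm hsp') (Ne.symm hrq)
          (Ne.symm hsq') (Ne.symm hsr)
          ⟨hpos p q hp hqS (Ne.symm hqp), hpos p r hp hrS (Ne.symm hrp),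
           hpos p s hp hsS (Ne.symm hsp'), hpos q r hqS hrS (Ne.symm hrq),
           hpos q s hqS hsS (Ne.symm hsq'), hpos r s hrS hsS (Ne.symm hsr)⟩
      -- restrict sums to S
      have hQS : QQ wt x = ∑ p ∈ S, ∑ q ∈ S, wt p q * x p * x q := by
        rw [QQ]
        rw [← Finset.sum_subset (Finset.subset_univ S) (fun p _ hp => by
          rw [hxzero p hp, zero_mul])]
        refine Finset.sum_congr rfl fun p _ => ?_
        rw [gQ, Finset.mul_sum, ← Finset.sum_subset (Finset.subset_univ S) (fun q _ hq => by
          rw [hxzero q hq, mul_zero, mul_zero])]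
        refine Finset.sum_congr rfl fun q _ => ?_
        ring
      have hsumS : ∑ p ∈ S, x p = 1 := by
        rw [Finset.sum_subset (Finset.subset_univ S) (fun p _ hp => hxzero p hp)]
        exact hsum
      rw [le_div_iff₀ h4a, hQS]
      interval_cases hc : S.card
      · exfalso
        rw [Finset.card_eq_zero.mp hc] at hsumS
        simp at hsumS
      · obtain ⟨p, hp⟩ := Finset.card_eq_one.mp hc
        rw [hp]
        have hz : ∑ p' ∈ {p}, ∑ q ∈ {p}, wt p' q * x p' * x q = 0 := by
          simp [hdiag p]
        rw [hz]
        linarith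
      · obtain ⟨p, q, hpq, hp⟩ := Finset.card_eq_two.mp hc
        have hpS : p ∈ S := by rw [hp]; simp
        have hqS : q ∈ S := by rw [hp]; simp
        rw [hp] at hsumS ⊢
        rw [Finset.sum_pair hpq] at hsumS ⊢
        rw [Finset.sum_pair hpq, Finset.sum_pair hpq]
        rw [hdiag p, hdiag q, hsym q p]
        nlinarith [h1 p q, h0 p q, hx p, hx q, sq_nonneg (x p - x q),
          mul_nonneg (hx p) (hx q),
          mul_nonneg (mul_nonneg (sub_nonneg.2 (h1 p q)) (hx p)) (hx q)]
      · obtain ⟨p, q, r, hpq, hpr, hqr, hp⟩ := Finset.card_eq_three.mp hc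
        have hpS : p ∈ S := by rw [hp]; simp
        have hqS : q ∈ S := by rw [hp]; simp
        have hrS : r ∈ S := by rw [hp]; simp
        have w1 := hpos p q hpS hqS hpq
        have w2 := hpos p r hpS hrS hpr
        have w3 := hpos q r hqS hrS hqr
        have hexp : ∀ f : Fin n → ℝ, ∑ z ∈ ({p, q, r} : Finset (Fin n)), f z
            = f p + f q + f r := by
          intro f
          rw [show ({p, q, r} : Finset (Fin n)) = insert p (insert q {r}) from rfl,
            Finset.sum_insert (by simp [hpq, hpr]), Finset.sum_insert (by simp [hqr]),
            Finset.sum_singleton]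
          ring
        rw [hp] at hsumS ⊢
        rw [hexp] at hsumS
        rw [hexp, hexp, hexp, hexp]
        rw [hdiag p, hdiag q, hdiag r, hsym q p, hsym r p, hsym r q]
        rcases htri p q r hpq hpr hqr w1 w2 w3 with hle | hle | hle
        · linarith [tri_quad ha h4a (h1 p r) (h1 q r) hle (hx r) (hx p) (hx q)
            (by linarith : x r + x p + x q = 1)]
        · linarith [tri_quad ha h4a (h1 p q) (h1 q r) hle (hx q) (hx p) (hx r)
            (by linarith : x q + x p + x r = 1)]
        · linarith [tri_quad ha h4a (h1 p q) (h1 p r) hle (hx p) (hx q) (hx r)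
            (by linarith : x p + x q + x r = 1)]
lemma inj3 {α : Type*} {u v z : α} (h1 : u ≠ v) (h2 : u ≠ z) (h3 : v ≠ z) :
    Function.Injective ![u, v, z] := by
  intro i j hij
  fin_cases i <;> fin_cases j <;> simp_all

lemma inj4 {α : Type*} {u v z t : α} (h1 : u ≠ v) (h2 : u ≠ z) (h3 : u ≠ t)
    (h4 : v ≠ z) (h5 : v ≠ t) (h6 : z ≠ t) :
    Function.Injective ![u, v, z, t] := by
  intro i j hij
  fin_cases i <;> fin_cases j <;> simp_all

lemma contains3 {n : ℕ} (G : SimpleGraph (Fin n)) (w : Fin n → Fin n → ℝ) (a : ℝ)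
    {u v z : Fin n} (huv : u ≠ v) (huz : u ≠ z) (hvz : v ≠ z)
    (h1 : G.Adj u v) (h2 : G.Adj u z) (h3 : G.Adj v z)
    (q1 : a < w u v) (q2 : a < w u z) (q3 : a < w v z) :
    ContainsWC G w (constWeightedClique 3 a) := by
  refine ⟨![u, v, z], inj3 huv huz hvz, ?_⟩
  intro i j hij
  fin_cases i <;> fin_cases j <;> simp_all [constWeightedClique]

lemma contains4 {n : ℕ} (G : SimpleGraph (Fin n)) (w : Fin n → Fin n → ℝ)
    {u v z t : Fin n} (d1 : u ≠ v) (d2 : u ≠ z) (d3 : u ≠ t) (d4 : v ≠ z) (d5 : v ≠ t)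
    (d6 : z ≠ t)
    (h1 : G.Adj u v) (h2 : G.Adj u z) (h3 : G.Adj u t) (h4 : G.Adj v z) (h5 : G.Adj v t)
    (h6 : G.Adj z t)
    (q1 : 0 < w u v) (q2 : 0 < w u z) (q3 : 0 < w u t) (q4 : 0 < w v z) (q5 : 0 < w v t)
    (q6 : 0 < w z t) :
    ContainsWC G w (constWeightedClique 4 0) := by
  refine ⟨![u, v, z, t], inj4 d1 d2 d3 d4 d5 d6, ?_⟩
  intro i j hij
  fin_cases i <;> fin_cases j <;> simp_all [constWeightedClique]

lemma wSum_le {a : ℝ} (ha : 0 < a) (ha1 : a ≤ 1) {n : ℕ}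
    (G : SimpleGraph (Fin n)) (w : Fin n → Fin n → ℝ)
    (hsymw : ∀ u v, w u v = w v u)
    (hbd : ∀ u v, G.Adj u v → w u v ∈ Set.Icc (0:ℝ) 1)
    (hfree : WCFree G w {constWeightedClique 3 a, constWeightedClique 4 0}) :
    wSum G w ≤ 2 / (4 - a) := by
  have h4a : (0:ℝ) < 4 - a := by linarith
  rcases Nat.eq_zero_or_pos n with hn | hn
  · subst hn
    rw [wSum]
    simp
    positivity
  set wt : Fin n → Fin n → ℝ := fun u v => if G.Adj u v then w u v else 0 with hwt
  have hwtadj : ∀ u v, 0 < wt u v → G.Adj u v ∧ w u v = wt u v := by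
    intro u v h
    rw [hwt] at h ⊢
    by_cases hadj : G.Adj u v
    · simp [hadj]
    · simp [hadj] at h
  have hsym : ∀ u v, wt u v = wt v u := by
    intro u v
    rw [hwt]
    by_cases hadj : G.Adj u v
    · simp [hadj, hadj.symm, hsymw u v]
    · have : ¬ G.Adj v u := fun h => hadj h.symm
      simp [hadj, this]
  have h0 : ∀ u v, 0 ≤ wt u v := by
    intro u v
    rw [hwt]
    by_cases hadj : G.Adj u v
    · simp only [hadj, if_true]
      exact (hbd u v hadj).1
    · simp [hadj]
  have h1 : ∀ u v, wt u v ≤ 1 := by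
    intro u v
    rw [hwt]
    by_cases hadj : G.Adj u v
    · simp only [hadj, if_true]
      exact (hbd u v hadj).2
    · simp [hadj]
  have hdiag : ∀ u, wt u u = 0 := by
    intro u
    simp [hwt]
  have htri : ∀ u v z : Fin n, u ≠ v → u ≠ z → v ≠ z →
      0 < wt u v → 0 < wt u z → 0 < wt v z →
      wt u v ≤ a ∨ wt u z ≤ a ∨ wt v z ≤ a := by
    intro u v z huv huz hvz w1 w2 w3
    by_contra hcon
    push_neg at hcon
    obtain ⟨hc1, hc2, hc3⟩ := hcon
    obtain ⟨ha1', he1⟩ := hwtadj u v w1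
    obtain ⟨ha2', he2⟩ := hwtadj u z w2
    obtain ⟨ha3', he3⟩ := hwtadj v z w3
    exact hfree (constWeightedClique 3 a) (Set.mem_insert _ _)
      (contains3 G w a huv huz hvz ha1' ha2' ha3'
        (he1 ▸ hc1) (he2 ▸ hc2) (he3 ▸ hc3))
  have hK4 : ∀ p q r s : Fin n, p ≠ q → p ≠ r → p ≠ s → q ≠ r → q ≠ s → r ≠ s →
      ¬(0 < wt p q ∧ 0 < wt p r ∧ 0 < wt p s ∧ 0 < wt q r ∧ 0 < wt q s ∧ 0 < wt r s) := by
    intro p q r s h1' h2' h3' h4' h5' h6' ⟨w1, w2, w3, w4, w5, w6⟩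
    obtain ⟨ha1', he1⟩ := hwtadj p q w1
    obtain ⟨ha2', he2⟩ := hwtadj p r w2
    obtain ⟨ha3', he3⟩ := hwtadj p s w3
    obtain ⟨ha4', he4⟩ := hwtadj q r w4
    obtain ⟨ha5', he5⟩ := hwtadj q s w5
    obtain ⟨ha6', he6⟩ := hwtadj r s w6
    exact hfree (constWeightedClique 4 0) (Set.mem_insert_iff.2 (Or.inr rfl))
      (contains4 G w h1' h2' h3' h4' h5' h6' ha1' ha2' ha3' ha4' ha5' ha6'
        (he1 ▸ w1) (he2 ▸ w2) (he3 ▸ w3) (he4 ▸ w4) (he5 ▸ w5) (he6 ▸ w6))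
  have hne : (n:ℝ) ≠ 0 := Nat.cast_ne_zero.2 (Nat.pos_iff_ne_zero.mp hn)
  have hwSum : wSum G w = QQ wt (fun _ => (n:ℝ)⁻¹) := by
    rw [wSum, QQ]
    rw [Finset.mul_sum]
    refine Finset.sum_congr rfl fun p _ => ?_
    rw [gQ, Finset.mul_sum, Finset.mul_sum]
    refine Finset.sum_congr rfl fun q _ => ?_
    rw [hwt]
    simp only [pow_two, mul_inv]
    ring
  rw [hwSum]
  refine key_bound ha ha1 wt hsym h0 h1 hdiag htri hK4 n (fun _ => (n:ℝ)⁻¹)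
    (fun v => by positivity) ?_ ?_
  · rw [Finset.sum_const, Finset.card_univ, Fintype.card_fin, nsmul_eq_mul]
    field_simp
  · exact le_trans (Finset.card_filter_le _ _) (by simp)
def partIdx (s : ℕ) (i : ℕ) : ℕ := if i < s then 0 else if i < 2*s then 1 else 2

lemma partIdx_lt3 (s i : ℕ) : partIdx s i < 3 := by
  unfold partIdx; split_ifs <;> omega

def conGraph (n s : ℕ) : SimpleGraph (Fin n) where
  Adj u v := partIdx s u.val ≠ partIdx s v.val
  symm := ⟨fun u v h => Ne.symm h⟩
  loopless := ⟨fun u h => h rfl⟩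

noncomputable def conW (a : ℝ) (s : ℕ) {n : ℕ} : Fin n → Fin n → ℝ := fun u v =>
  if partIdx s u.val = 2 ∨ partIdx s v.val = 2 then 1 else a

lemma conGraph_adj {n s : ℕ} (u v : Fin n) :
    (conGraph n s).Adj u v ↔ partIdx s u.val ≠ partIdx s v.val := Iff.rfl

lemma con_free {n s : ℕ} (a : ℝ) (ha : 0 < a) :
    WCFree (conGraph n s) (conW a s) {constWeightedClique 3 a, constWeightedClique 4 0} := by
  intro C hC
  rcases Set.mem_insert_iff.mp hC with h | h
  · subst h
    rintro ⟨φ0, hinj0, hall0⟩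
    have φ : Fin 3 → Fin n := φ0
    have hall : ∀ i j : Fin 3, i < j →
        (conGraph n s).Adj (φ0 i) (φ0 j) ∧ a < conW a s (φ0 i) (φ0 j) :=
      fun i j h => hall0 i j h
    have h01 := hall 0 1 (by decide)
    have h02 := hall 0 2 (by decide)
    have h12 := hall 1 2 (by decide)
    have d01 : partIdx s (φ0 (0 : Fin 3)).val ≠ partIdx s (φ0 (1 : Fin 3)).val := h01.1
    have d02 : partIdx s (φ0 (0 : Fin 3)).val ≠ partIdx s (φ0 (2 : Fin 3)).val := h02.1
    have d12 : partIdx s (φ0 (1 : Fin 3)).val ≠ partIdx s (φ0 (2 : Fin 3)).val := h12.1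
    by_cases e0 : partIdx s (φ0 (0 : Fin 3)).val = 2
    · have e1 : partIdx s (φ0 (1 : Fin 3)).val ≠ 2 := fun h => d01 (by rw [e0, h])
      have e2 : partIdx s (φ0 (2 : Fin 3)).val ≠ 2 := fun h => d02 (by rw [e0, h])
      have hca : conW a s (φ0 (1 : Fin 3)) (φ0 (2 : Fin 3)) = a := by
        rw [conW, if_neg (by tauto)]
      have hlt := h12.2
      rw [hca] at hlt
      exact lt_irrefl a hlt
    · by_cases e1 : partIdx s (φ0 (1 : Fin 3)).val = 2
      · have e2 : partIdx s (φ0 (2 : Fin 3)).val ≠ 2 := fun h => d12 (by rw [e1, h])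
        have hca : conW a s (φ0 (0 : Fin 3)) (φ0 (2 : Fin 3)) = a := by
          rw [conW, if_neg (by tauto)]
        have hlt := h02.2
        rw [hca] at hlt
        exact lt_irrefl a hlt
      · have hca : conW a s (φ0 (0 : Fin 3)) (φ0 (1 : Fin 3)) = a := by
          rw [conW, if_neg (by tauto)]
        have hlt := h01.2
        rw [hca] at hlt
        exact lt_irrefl a hlt
  · rw [Set.mem_singleton_iff] at h
    subst h
    rintro ⟨φ0, hinj0, hall0⟩
    have hall : ∀ i j : Fin 4, i < j →
        (conGraph n s).Adj (φ0 i) (φ0 j) ∧ (0:ℝ) < conW a s (φ0 i) (φ0 j) :=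
      fun i j h => hall0 i j h
    have hd : ∀ i j : Fin 4, i ≠ j → partIdx s (φ0 i).val ≠ partIdx s (φ0 j).val := by
      intro i j hij
      rcases lt_or_gt_of_ne hij with h | h
      · exact (hall i j h).1
      · exact fun he => (hall j i h).1 he.symm
    have hinj3 : Function.Injective
        (fun i : Fin 4 => (⟨partIdx s (φ0 i).val, partIdx_lt3 s _⟩ : Fin 3)) := by
      intro i j hij
      by_contra hne
      exact hd i j hne (by simpa [Fin.mk.injEq] using hij)
    have := Fintype.card_le_of_injective _ hinj3
    simp at this

lemma sum_part (n s : ℕ) (h2s : 2*s ≤ n) (h : ℕ → ℝ) :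
    ∑ v : Fin n, h (partIdx s v.val) =
      s * h 0 + s * h 1 + ((n : ℝ) - 2*s) * h 2 := by
  rw [Fin.sum_univ_eq_sum_range (fun i => h (partIdx s i)) n]
  rw [Finset.range_eq_Ico]
  have hs2 : s ≤ 2*s := by omega
  have hsn : s ≤ n := by omega
  rw [← Finset.sum_Ico_consecutive (fun i => h (partIdx s i)) (Nat.zero_le (2*s)) h2s]
  rw [← Finset.sum_Ico_consecutive (fun i => h (partIdx s i)) (Nat.zero_le s) hs2]
  have e1 : ∑ i ∈ Ico 0 s, h (partIdx s i) = s * h 0 := by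
    rw [Finset.sum_congr rfl (fun i hi => by
      rw [partIdx, if_pos (Finset.mem_Ico.mp hi).2])]
    rw [Finset.sum_const, Nat.card_Ico, nsmul_eq_mul]
    simp
  have e2 : ∑ i ∈ Ico s (2*s), h (partIdx s i) = s * h 1 := by
    rw [Finset.sum_congr rfl (fun i hi => by
      have hi' := Finset.mem_Ico.mp hi
      rw [partIdx, if_neg (by omega), if_pos hi'.2])]
    rw [Finset.sum_const, Nat.card_Ico, nsmul_eq_mul]
    congr 1
    · simp; omega
  have e3 : ∑ i ∈ Ico (2*s) n, h (partIdx s i) = ((n:ℝ) - 2*s) * h 2 := by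
    rw [Finset.sum_congr rfl (fun i hi => by
      have hi' := Finset.mem_Ico.mp hi
      rw [partIdx, if_neg (by omega), if_neg (by omega)])]
    rw [Finset.sum_const, Nat.card_Ico, nsmul_eq_mul]
    congr 1
    rw [Nat.cast_sub h2s]
    push_cast
    ring
  rw [e1, e2, e3]

lemma con_wSum (a : ℝ) (n s : ℕ) (h2s : 2*s ≤ n) :
    wSum (conGraph n s) (conW a s) =
      ((n : ℝ)^2)⁻¹ * (2*a*(s:ℝ)^2 + 4*(s:ℝ)*((n:ℝ) - 2*(s:ℝ))) := by
  classical
  set F : ℕ → ℕ → ℝ := fun i j =>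
    if i ≠ j then (if i = 2 ∨ j = 2 then 1 else a) else 0 with hF
  have hpt : ∀ u v : Fin n,
      (if (conGraph n s).Adj u v then conW a s u v else 0)
        = F (partIdx s u.val) (partIdx s v.val) := by
    intro u v
    by_cases h : partIdx s u.val = partIdx s v.val
    · rw [if_neg (by rw [conGraph_adj]; simpa using h), hF]
      simp [h]
    · rw [if_pos (by rw [conGraph_adj]; exact h), hF, conW]
      simp [h]
  rw [wSum]
  congr 1
  rw [Finset.sum_congr rfl (fun u _ => Finset.sum_congr rfl (fun v _ => hpt u v))]
  rw [Finset.sum_congr rfl (fun u _ =>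
    sum_part n s h2s (fun j => F (partIdx s u.val) j))]
  rw [sum_part n s h2s (fun i => (s:ℝ) * F i 0 + (s:ℝ) * F i 1 + ((n:ℝ) - 2*s) * F i 2)]
  have F00 : F 0 0 = 0 := by norm_num [hF]
  have F01 : F 0 1 = a := by norm_num [hF]
  have F02 : F 0 2 = 1 := by norm_num [hF]
  have F10 : F 1 0 = a := by norm_num [hF]
  have F11 : F 1 1 = 0 := by norm_num [hF]
  have F12 : F 1 2 = 1 := by norm_num [hF]
  have F20 : F 2 0 = 1 := by norm_num [hF]
  have F21 : F 2 1 = 1 := by norm_num [hF]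
  have F22 : F 2 2 = 0 := by norm_num [hF]
  rw [F00, F01, F02, F10, F11, F12, F20, F21, F22]
  ring

theorem dWC_heavy_triangle (a : ℝ) (ha : 0 < a) (ha1 : a ≤ 1) :
    Filter.Tendsto (betaWC {constWeightedClique 3 a, constWeightedClique 4 0})
      Filter.atTop (nhds (2 / (4 - a))) := by
  have h4a : (0:ℝ) < 4 - a := by linarith
  have hub : (0:ℝ) ≤ 2 / (4 - a) := by positivity
  set F : Set WeightedClique := {constWeightedClique 3 a, constWeightedClique 4 0} with hFdef
  -- upper bound
  have hupper : ∀ n : ℕ, betaWC F n ≤ 2 / (4 - a) := by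
    intro n
    apply Real.sSup_le _ hub
    rintro x ⟨G, w, hs, hb, hf, rfl⟩
    exact wSum_le ha ha1 G w hs hb hf
  -- the floor-based part size
  set sf : ℕ → ℕ := fun n => ⌊(n:ℝ)/(4-a)⌋₊ with hsf
  have h2s : ∀ n : ℕ, 2 * sf n ≤ n := by
    intro n
    have h1 : (sf n : ℝ) ≤ (n:ℝ)/(4-a) := Nat.floor_le (by positivity)
    have h2 : (n:ℝ)/(4-a) ≤ (n:ℝ)/3 := by
      apply div_le_div_of_nonneg_left (by positivity) (by norm_num) (by linarith)
    have h3 : (2 * sf n : ℝ) ≤ (n:ℝ) := by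
      have h4 := le_trans h1 h2
      rw [le_div_iff₀ (by norm_num : (0:ℝ) < 3)] at h4
      have h5 : (0:ℝ) ≤ (sf n : ℝ) := Nat.cast_nonneg _
      push_cast
      linarith
    exact_mod_cast h3
  -- lower bound sequence
  set L : ℕ → ℝ := fun n =>
    ((n : ℝ)^2)⁻¹ * (2*a*(sf n:ℝ)^2 + 4*(sf n:ℝ)*((n:ℝ) - 2*(sf n:ℝ))) with hLdef
  have hlower : ∀ n : ℕ, L n ≤ betaWC F n := by
    intro n
    apply le_csSup
    · refine ⟨2 / (4 - a), ?_⟩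
      rintro x ⟨G, w, hs, hb, hf, rfl⟩
      exact wSum_le ha ha1 G w hs hb hf
    · refine ⟨conGraph n (sf n), conW a (sf n), ?_, ?_, con_free a ha, ?_⟩
      · intro u v
        rw [conW, conW]
        simp [or_comm]
      · intro u v _
        rw [conW]
        split_ifs
        · exact ⟨zero_le_one, le_refl 1⟩
        · exact ⟨ha.le, ha1⟩
      · rw [con_wSum a n (sf n) (h2s n), hLdef]
  -- the ratio tends to 1/(4-a)
  have hc : (0:ℝ) < 1/(4-a) := by positivity
  have ht : Filter.Tendsto (fun n : ℕ => (sf n : ℝ)/(n:ℝ)) Filter.atTop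
      (nhds (1/(4-a))) := by
    apply tendsto_of_tendsto_of_tendsto_of_le_of_le'
      (g := fun n : ℕ => 1/(4-a) - 1/(n:ℝ)) (h := fun _ : ℕ => 1/(4-a))
    · have h0 : Filter.Tendsto (fun n : ℕ => 1/(4-a) - 1/(n:ℝ)) Filter.atTop
          (nhds (1/(4-a) - 0)) :=
        Filter.Tendsto.sub tendsto_const_nhds tendsto_one_div_atTop_nhds_zero_nat
      simpa using h0
    · exact tendsto_const_nhds
    · filter_upwards [Filter.eventually_ge_atTop 1] with n hn
      have hnpos : (0:ℝ) < (n:ℝ) := by exact_mod_cast hn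
      have hfl : (n:ℝ)/(4-a) < (sf n : ℝ) + 1 := Nat.lt_floor_add_one _
      rw [le_div_iff₀ hnpos]
      have heq : (1/(4-a) - 1/(n:ℝ))*(n:ℝ) = (n:ℝ)/(4-a) - 1 := by
        field_simp
      rw [heq]
      linarith
    · filter_upwards [Filter.eventually_ge_atTop 1] with n hn
      have hnpos : (0:ℝ) < (n:ℝ) := by exact_mod_cast hn
      have h1 : (sf n : ℝ) ≤ (n:ℝ)/(4-a) := Nat.floor_le (by positivity)
      rw [div_le_iff₀ hnpos]
      calc (sf n : ℝ) ≤ (n:ℝ)/(4-a) := h1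
        _ = 1/(4-a) * n := by ring
  -- limit of the lower bound sequence
  have hg : Continuous (fun x : ℝ => 2*a*x^2 + 4*x*(1 - 2*x)) := by continuity
  have hL' : Filter.Tendsto (fun n : ℕ => 2*a*((sf n:ℝ)/(n:ℝ))^2
      + 4*((sf n:ℝ)/(n:ℝ))*(1 - 2*((sf n:ℝ)/(n:ℝ)))) Filter.atTop
      (nhds (2*a*(1/(4-a))^2 + 4*(1/(4-a))*(1 - 2*(1/(4-a))))) :=
    (hg.tendsto _).comp ht
  have hval : 2*a*(1/(4-a))^2 + 4*(1/(4-a))*(1 - 2*(1/(4-a))) = 2/(4-a) := by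
    field_simp
    ring
  rw [hval] at hL'
  have hLL : ∀ᶠ n : ℕ in Filter.atTop, 2*a*((sf n:ℝ)/(n:ℝ))^2
      + 4*((sf n:ℝ)/(n:ℝ))*(1 - 2*((sf n:ℝ)/(n:ℝ))) = L n := by
    filter_upwards [Filter.eventually_ge_atTop 1] with n hn
    have hnne : (n:ℝ) ≠ 0 := by
      have : (0:ℝ) < (n:ℝ) := by exact_mod_cast hn
      linarith
    rw [hLdef]
    field_simp
  have hLt : Filter.Tendsto L Filter.atTop (nhds (2/(4-a))) :=
    Filter.Tendsto.congr' hLL hL'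
  exact tendsto_of_tendsto_of_tendsto_of_le_of_le' hLt tendsto_const_nhds
    (Filter.Eventually.of_forall hlower) (Filter.Eventually.of_forall hupper)
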